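/- arXiv:2308.07467 — 2 statements merged into one kernel-verified Lean document; each statement's English description precedes it below -/
import Mathlib

section
/- Let f and g be generalized palindromes in ℂ[z,z⁻¹] with f̄ = u·z^j·f and ḡ = v·z^k·g for some u, v ∈ ℂ^× and j, k ∈ ℤ. Let F be a subfield of ℂ and suppose that f, g ∈ F[z,z⁻¹] and that f and g are ℂ[z,z⁻¹]-associates. Then either f = g = 0, or else there exists w ∈ F^× with v/u = conj(w)/w and moreover j ≡ k (mod 2). -/
open LaurentPolynomial
open scoped Classical

/-- The length of a Laurent polynomial: 1 plus the difference between the maximal and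
minimal exponents occurring with nonzero coefficient; the length of 0 is 0. -/
noncomputable def len {F : Type*} [Field F] (f : LaurentPolynomial F) : ℤ :=
  if h : f = 0 then 0
  else f.coeff.support.max' (Finsupp.support_nonempty_iff.mpr (AddMonoidAlgebra.coeff_eq_zero.not.mpr h))
     - f.coeff.support.min' (Finsupp.support_nonempty_iff.mpr (AddMonoidAlgebra.coeff_eq_zero.not.mpr h)) + 1

/-- Substitution `f(z) ↦ f(z^m)`: the image of `f` under the ring homomorphism
sending `z` to `z^m`. -/
noncomputable def subst {F : Type*} [Field F] (m : ℤ) (f : LaurentPolynomial F) :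
    LaurentPolynomial F :=
  AddMonoidAlgebra.mapDomainRingHom F (AddMonoidHom.mulLeft m) f

/-- The subring `F[z,z⁻¹]` of `E[z,z⁻¹]` consisting of Laurent polynomials all of whose
coefficients lie in the subfield `F` of `E`. -/
noncomputable def LRing {E : Type*} [Field E] (F : Subfield E) :
    Subring (LaurentPolynomial E) where
  carrier := {f : LaurentPolynomial E | ∀ n : ℤ, f.coeff n ∈ F}
  zero_mem' := fun n => F.zero_mem
  one_mem' := by
    intro n
    rw [AddMonoidAlgebra.one_def, AddMonoidAlgebra.coeff_single, Finsupp.single_apply]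
    split_ifs
    · exact F.one_mem
    · exact F.zero_mem
  add_mem' := by
    intro f g hf hg n
    rw [AddMonoidAlgebra.coeff_add, Finsupp.add_apply]
    exact add_mem (hf n) (hg n)
  neg_mem' := by
    intro f hf n
    rw [AddMonoidAlgebra.coeff_neg, Finsupp.neg_apply]
    exact neg_mem (hf n)
  mul_mem' := by
    intro f g hf hg n
    rw [AddMonoidAlgebra.coeff_mul]
    refine sum_mem fun a ha => sum_mem fun b hb => ?_
    dsimp only
    split_ifs
    · exact mul_mem (hf a) (hg b)
    · exact zero_mem F

/-- The conjugate of `f(z) = Σ f_j z^j`, namely `f̄(z) = Σ conj(f_j) z^{-j}`. -/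
noncomputable def lconj (f : LaurentPolynomial ℂ) : LaurentPolynomial ℂ :=
  AddMonoidAlgebra.ofCoeff
    (Finsupp.equivMapDomain (Equiv.neg ℤ) (Finsupp.mapRange (starRingEnd ℂ) (map_zero _) f.coeff))

/-- `f` and `g` are equicorrelational: `f·f̄ = c·g·ḡ` for some positive real `c`. -/
def Equicorrelational (f g : LaurentPolynomial ℂ) : Prop :=
  ∃ c : ℝ, 0 < c ∧ f * lconj f = C (c : ℂ) * (g * lconj g)

/-- `f` and `g` are trivially equicorrelational: `g` is a `ℂ[z,z⁻¹]`-associate of `f`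
or of `f̄`. -/
def TrivEquicorrelational (f g : LaurentPolynomial ℂ) : Prop :=
  Associated g f ∨ Associated g (lconj f)

lemma lconj_apply (f : LaurentPolynomial ℂ) (n : ℤ) :
    (lconj f).coeff n = (starRingEnd ℂ) (f.coeff (-n)) := rfl

lemma lconj_single (n : ℤ) (a : ℂ) :
    lconj (AddMonoidAlgebra.single n a) = AddMonoidAlgebra.single (-n) ((starRingEnd ℂ) a) := by
  ext m
  rw [lconj_apply, AddMonoidAlgebra.coeff_single, AddMonoidAlgebra.coeff_single, Finsupp.single_apply, Finsupp.single_apply]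
  split_ifs with h1 h2 <;> simp_all <;> omega

lemma lconj_add (f g : LaurentPolynomial ℂ) : lconj (f + g) = lconj f + lconj g := by
  ext n
  rw [AddMonoidAlgebra.coeff_add, Finsupp.add_apply, lconj_apply, lconj_apply, lconj_apply, AddMonoidAlgebra.coeff_add, Finsupp.add_apply, map_add]

noncomputable def lcHom : LaurentPolynomial ℂ →+* LaurentPolynomial ℂ :=
  AddMonoidAlgebra.liftNCRingHom ((C : ℂ →+* LaurentPolynomial ℂ).comp (starRingEnd ℂ))
    ⟨⟨fun n => T (-(Multiplicative.toAdd n)), by simp⟩,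
      fun x y => by
        simp only [toAdd_mul, neg_add, T_add]⟩
    (fun x y => Commute.all _ _)

lemma lcHom_single (n : ℤ) (a : ℂ) :
    lcHom (AddMonoidAlgebra.single n a) = AddMonoidAlgebra.single (-n) ((starRingEnd ℂ) a) := by
  rw [single_eq_C_mul_T ((starRingEnd ℂ) a) (-n)]
  exact AddMonoidAlgebra.liftNC_single _ _ _ _

lemma lconj_eq_lcHom (f : LaurentPolynomial ℂ) : lconj f = lcHom f := by
  induction f using AddMonoidAlgebra.induction with
  | zero => rw [map_zero]; ext n; simp [lconj_apply]
  | single_add n a f hn ha ih =>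
    rw [lconj_add, map_add, ih, lconj_single, lcHom_single]

lemma lconj_mul (f g : LaurentPolynomial ℂ) : lconj (f * g) = lconj f * lconj g := by
  simp only [lconj_eq_lcHom, map_mul]

lemma lconj_C (a : ℂ) : lconj (C a) = C ((starRingEnd ℂ) a) := by
  rw [← single_eq_C, lconj_single, neg_zero, single_eq_C]

lemma lconj_T (n : ℤ) : lconj (T n) = T (-n) := by
  rw [T, lconj_single, map_one, T]

lemma mul_apply_ub (p q : LaurentPolynomial ℂ) (a b : ℤ)
    (ha : ∀ i ∈ p.coeff.support, i ≤ a) (hb : ∀ j ∈ q.coeff.support, j ≤ b) :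
    (p * q).coeff (a + b) = p.coeff a * q.coeff b := by
  rw [AddMonoidAlgebra.coeff_mul, Finsupp.sum]
  have h1 : ∀ i ∈ p.coeff.support,
      (Finsupp.sum q.coeff fun a₂ b₂ => if i + a₂ = a + b then p.coeff i * b₂ else 0)
        = if i = a then (if b ∈ q.coeff.support then p.coeff a * q.coeff b else 0) else 0 := by
    intro i hi
    rw [Finsupp.sum]
    by_cases hia : i = a
    · subst hia
      rw [if_pos rfl]
      have : ∀ j ∈ q.coeff.support, (if i + j = i + b then p.coeff i * q.coeff j else 0)
          = if j = b then p.coeff i * q.coeff b else 0 := by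
        intro j hj
        by_cases hjb : j = b
        · subst hjb; simp
        · rw [if_neg hjb, if_neg (by omega)]
      rw [Finset.sum_congr rfl this, Finset.sum_ite_eq' q.coeff.support b]
    · rw [if_neg hia]
      apply Finset.sum_eq_zero
      intro j hj
      have := ha i hi
      have := hb j hj
      rw [if_neg (by omega)]
  rw [Finset.sum_congr rfl h1, Finset.sum_ite_eq' p.coeff.support a]
  by_cases hpa : a ∈ p.coeff.support
  · rw [if_pos hpa]
    by_cases hqb : b ∈ q.coeff.support
    · rw [if_pos hqb]
    · rw [if_neg hqb, Finsupp.notMem_support_iff.mp hqb, mul_zero]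
  · rw [if_neg hpa, Finsupp.notMem_support_iff.mp hpa, zero_mul]

lemma mul_apply_lb (p q : LaurentPolynomial ℂ) (a b : ℤ)
    (ha : ∀ i ∈ p.coeff.support, a ≤ i) (hb : ∀ j ∈ q.coeff.support, b ≤ j) :
    (p * q).coeff (a + b) = p.coeff a * q.coeff b := by
  have h := mul_apply_ub (invert p) (invert q) (-a) (-b) ?_ ?_
  · have h2 : (invert (p * q)).coeff (-a + -b) = p.coeff a * q.coeff b := by
      rw [map_mul]; rw [h, invert_apply, invert_apply]; ring_nf
    rw [invert_apply] at h2
    rw [show -(-a + -b) = a + b by ring] at h2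
    exact h2
  · intro i hi
    have : -i ∈ p.coeff.support := by
      simpa [Finsupp.mem_support_iff, invert_apply] using hi
    have := ha (-i) this; omega
  · intro i hi
    have : -i ∈ q.coeff.support := by
      simpa [Finsupp.mem_support_iff, invert_apply] using hi
    have := hb (-i) this; omega

lemma one_apply' (n : ℤ) : (1 : LaurentPolynomial ℂ).coeff n = if n = 0 then 1 else 0 := by
  rw [← single_zero_one_eq_one, AddMonoidAlgebra.coeff_single, Finsupp.single_apply]
  split_ifs <;> simp_all

lemma unit_structure (W : (LaurentPolynomial ℂ)ˣ) :
    ∃ (c : ℂ) (m : ℤ), c ≠ 0 ∧ (W : LaurentPolynomial ℂ) = C c * T m := by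
  set p : LaurentPolynomial ℂ := ↑W with hp
  set q : LaurentPolynomial ℂ := ↑W⁻¹ with hq
  have hpq : p * q = 1 := by rw [hp, hq, ← Units.val_mul, mul_inv_cancel, Units.val_one]
  have hp0 : p ≠ 0 := W.ne_zero
  have hq0 : q ≠ 0 := W⁻¹.ne_zero
  have hps : p.coeff.support.Nonempty := Finsupp.support_nonempty_iff.mpr (AddMonoidAlgebra.coeff_eq_zero.not.mpr hp0)
  have hqs : q.coeff.support.Nonempty := Finsupp.support_nonempty_iff.mpr (AddMonoidAlgebra.coeff_eq_zero.not.mpr hq0)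
  set A := p.coeff.support.max' hps
  set A' := p.coeff.support.min' hps
  set B := q.coeff.support.max' hqs
  set B' := q.coeff.support.min' hqs
  have hub : (p * q).coeff (A + B) = p.coeff A * q.coeff B :=
    mul_apply_ub p q A B (fun i hi => Finset.le_max' _ _ hi) (fun j hj => Finset.le_max' _ _ hj)
  have hlb : (p * q).coeff (A' + B') = p.coeff A' * q.coeff B' :=
    mul_apply_lb p q A' B' (fun i hi => Finset.min'_le _ _ hi) (fun j hj => Finset.min'_le _ _ hj)
  have hA : p.coeff A ≠ 0 := Finsupp.mem_support_iff.mp (p.coeff.support.max'_mem hps)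
  have hA' : p.coeff A' ≠ 0 := Finsupp.mem_support_iff.mp (p.coeff.support.min'_mem hps)
  have hB : q.coeff B ≠ 0 := Finsupp.mem_support_iff.mp (q.coeff.support.max'_mem hqs)
  have hB' : q.coeff B' ≠ 0 := Finsupp.mem_support_iff.mp (q.coeff.support.min'_mem hqs)
  rw [hpq, one_apply'] at hub hlb
  have hAB : A + B = 0 := by
    by_contra h; rw [if_neg h] at hub; exact hA (by simpa using mul_eq_zero.mp hub.symm |>.resolve_right hB)
  have hAB' : A' + B' = 0 := by
    by_contra h; rw [if_neg h] at hlb; exact hA' (by simpa using mul_eq_zero.mp hlb.symm |>.resolve_right hB')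
  have hAA : A' ≤ A := Finset.min'_le _ _ (p.coeff.support.max'_mem hps)
  have hBB : B' ≤ B := Finset.min'_le _ _ (q.coeff.support.max'_mem hqs)
  have hAeq : A = A' := by omega
  refine ⟨p.coeff A, A, hA, ?_⟩
  rw [← single_eq_C_mul_T]
  ext n
  rw [AddMonoidAlgebra.coeff_single, Finsupp.single_apply]
  by_cases hn : A = n
  · subst hn; rw [if_pos rfl]
  · rw [if_neg hn]
    by_contra h
    have hmem : n ∈ p.coeff.support := Finsupp.mem_support_iff.mpr h
    have h1 := Finset.le_max' _ _ hmem
    have h2 := Finset.min'_le _ _ hmem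
    omega

lemma C_mul_T_apply (a : ℂ) (n x : ℤ) :
    (C a * T n : LaurentPolynomial ℂ).coeff x = if n = x then a else 0 := by
  rw [← single_eq_C_mul_T]
  exact Finsupp.single_apply

/-- A generalized palindrome: `f̄` is a `ℂ[z,z⁻¹]`-associate of `f`. -/
def GenPalindrome (f : LaurentPolynomial ℂ) : Prop :=
  Associated (lconj f) f

/-- `g` is an `F[z,z⁻¹]`-associate of `f`: `g = u·f` for some unit `u` of the subring
`F[z,z⁻¹]` of `ℂ[z,z⁻¹]`. -/
def FAssoc (F : Subfield ℂ) (g f : LaurentPolynomial ℂ) : Prop :=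
  ∃ u : (LRing F)ˣ, g = ((u : LRing F) : LaurentPolynomial ℂ) * f

/-- The `F[z,z⁻¹]`-associate class of `f`. -/
def facl (F : Subfield ℂ) (f : LaurentPolynomial ℂ) : Set (LaurentPolynomial ℂ) :=
  {g | FAssoc F g f}

/-- The `F`-trivial equicorrelationality class of `f`: all elements of `F[z,z⁻¹]`
that are trivially equicorrelational to `f`. -/
def fte (F : Subfield ℂ) (f : LaurentPolynomial ℂ) : Set (LaurentPolynomial ℂ) :=
  {g | g ∈ LRing F ∧ TrivEquicorrelational f g}

/-- A `k`-ary sequence: a Laurent polynomial whose support is a segment of consecutive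
integers and whose nonzero coefficients are complex `k`-th roots of unity. -/
def IsKary (k : ℕ) (f : LaurentPolynomial ℂ) : Prop :=
  (∀ i j l : ℤ, i ≤ j → j ≤ l → f.coeff i ≠ 0 → f.coeff l ≠ 0 → f.coeff j ≠ 0) ∧
  ∀ n : ℤ, f.coeff n ≠ 0 → (f.coeff n) ^ k = 1

/-- A binary sequence: a Laurent polynomial whose support is a segment of consecutive
integers and whose nonzero coefficients all lie in `{1, -1}`. -/
def IsBinary (f : LaurentPolynomial ℂ) : Prop :=
  (∀ i j l : ℤ, i ≤ j → j ≤ l → f.coeff i ≠ 0 → f.coeff l ≠ 0 → f.coeff j ≠ 0) ∧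
  ∀ n : ℤ, f.coeff n ≠ 0 → f.coeff n = 1 ∨ f.coeff n = -1

theorem stmt5 (f g : LaurentPolynomial ℂ) (u v : ℂ) (hu : u ≠ 0) (hv : v ≠ 0)
    (j k : ℤ) (hfp : lconj f = C u * T j * f) (hgp : lconj g = C v * T k * g)
    (F : Subfield ℂ) (hfF : f ∈ LRing F) (hgF : g ∈ LRing F)
    (hassoc : Associated f g) :
    (f = 0 ∧ g = 0) ∨
      ((∃ w : ℂ, w ∈ F ∧ w ≠ 0 ∧ v / u = (starRingEnd ℂ) w / w) ∧
        j ≡ k [ZMOD 2]) := by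
  have hfF : ∀ n : ℤ, f.coeff n ∈ F := hfF
  have hgF : ∀ n : ℤ, g.coeff n ∈ F := hgF
  by_cases hf0 : f = 0
  · left
    obtain ⟨W, hW⟩ := hassoc
    exact ⟨hf0, by rw [← hW, hf0, zero_mul]⟩
  right
  obtain ⟨W, hW⟩ := hassoc
  obtain ⟨c, m, hc, hWeq⟩ := unit_structure W
  have hg : g = f * (C c * T m) := by rw [← hW, hWeq]
  obtain ⟨n, hn⟩ := Finsupp.support_nonempty_iff.mpr (AddMonoidAlgebra.coeff_eq_zero.not.mpr hf0)
  have hfn : f.coeff n ≠ 0 := Finsupp.mem_support_iff.mp hn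
  have hgnm : g.coeff (n + m) = f.coeff n * c := by
    rw [hg, ← single_eq_C_mul_T, AddMonoidAlgebra.coeff_mul_single_apply, add_neg_cancel_right]
  have hcF : c ∈ F := by
    have h1 := hgF (n + m)
    have h2 := hfF n
    rw [hgnm] at h1
    have hcc : c = (f.coeff n)⁻¹ * (f.coeff n * c) := by field_simp
    rw [hcc]; exact mul_mem (inv_mem h2) h1
  have hlg : lconj g = lconj f * (C ((starRingEnd ℂ) c) * T (-m)) := by
    rw [hg, lconj_mul, lconj_mul, lconj_C, lconj_T]
  have e1 : (C v * T k) * (C c * T m) = (AddMonoidAlgebra.single (k + m) (v * c) : LaurentPolynomial ℂ) := by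
    rw [← single_eq_C_mul_T, ← single_eq_C_mul_T, AddMonoidAlgebra.single_mul_single]
  have e2 : (C u * T j) * (C ((starRingEnd ℂ) c) * T (-m))
      = (AddMonoidAlgebra.single (j + -m) (u * (starRingEnd ℂ) c) : LaurentPolynomial ℂ) := by
    rw [← single_eq_C_mul_T, ← single_eq_C_mul_T, AddMonoidAlgebra.single_mul_single]
  have main : C (v * c) * T (k + m) * f
      = C (u * (starRingEnd ℂ) c) * T (j + -m) * f := by
    rw [← single_eq_C_mul_T, ← single_eq_C_mul_T, e1.symm, e2.symm]
    calc C v * T k * (C c * T m) * f = C v * T k * (f * (C c * T m)) := by ring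
      _ = C v * T k * g := by rw [← hg]
      _ = lconj g := hgp.symm
      _ = lconj f * (C ((starRingEnd ℂ) c) * T (-m)) := hlg
      _ = C u * T j * f * (C ((starRingEnd ℂ) c) * T (-m)) := by rw [hfp]
      _ = C u * T j * (C ((starRingEnd ℂ) c) * T (-m)) * f := by ring
  have hcancel := mul_right_cancel₀ hf0 main
  have hcoef : (C (v * c) * T (k + m) : LaurentPolynomial ℂ).coeff (k + m)
      = (C (u * (starRingEnd ℂ) c) * T (j + -m) : LaurentPolynomial ℂ).coeff (k + m) := by
    rw [hcancel]
  rw [C_mul_T_apply, C_mul_T_apply, if_pos rfl] at hcoef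
  by_cases hjk : j + -m = k + m
  · rw [if_pos hjk] at hcoef
    refine ⟨⟨c, hcF, hc, ?_⟩, ?_⟩
    · rw [div_eq_div_iff hu hc]
      linear_combination hcoef
    · exact Int.ModEq.symm (Int.modEq_iff_dvd.mpr ⟨m, by omega⟩)
  · rw [if_neg hjk] at hcoef
    exact absurd hcoef (mul_ne_zero hv hc)
end

section
/- Let m and n be nonzero integers and let a, b, c, d be nonzero elements of ℂ[z,z⁻¹]. Let s be a greatest common divisor of a and c in ℂ[z,z⁻¹] and t a greatest common divisor of b and d in ℂ[z,z⁻¹], and write a = s·α, c = s·γ, b = t·β, d = t·δ. Set f(z) = a(z^m)·b(z^n) and g(z) = c(z^m)·d(z^n). Then f and g are ℂ[z,z⁻¹]-associates if and only if α(z^m) is a ℂ[z,z⁻¹]-associate of δ(z^n) and β(z^n) is a ℂ[z,z⁻¹]-associate of γ(z^m). -/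
open LaurentPolynomial
open scoped Classical

instance : NoZeroDivisors (LaurentPolynomial ℂ) :=
  inferInstanceAs (NoZeroDivisors (AddMonoidAlgebra ℂ ℤ))
instance : IsDomain (LaurentPolynomial ℂ) := NoZeroDivisors.to_isDomain _

theorem lpid : IsPrincipalIdealRing (LaurentPolynomial ℂ) := by
  haveI := LaurentPolynomial.isLocalization (R := ℂ)
  constructor
  intro I
  obtain ⟨g, hg⟩ :=
    (IsPrincipalIdealRing.principal (I.comap (algebraMap (Polynomial ℂ) (LaurentPolynomial ℂ))))
  refine ⟨algebraMap (Polynomial ℂ) (LaurentPolynomial ℂ) g, ?_⟩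
  conv_lhs => rw [← IsLocalization.map_comap (Submonoid.powers (Polynomial.X : Polynomial ℂ))
    (LaurentPolynomial ℂ) I]
  rw [Ideal.under_def, hg]
  show Ideal.map _ (Ideal.span _) = Ideal.span _
  rw [Ideal.map_span, Set.image_singleton]

theorem subst_inj (m : ℤ) (hm : m ≠ 0) :
    Function.Injective (subst (F := ℂ) m) :=
  AddMonoidAlgebra.mapDomain_injective (fun _ _ h => mul_left_cancel₀ hm h)

theorem subst_mul (m : ℤ) (f g : LaurentPolynomial ℂ) :
    subst m (f * g) = subst m f * subst m g :=
  map_mul (AddMonoidAlgebra.mapDomainRingHom ℂ (AddMonoidHom.mulLeft m)) f g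

theorem subst_ne_zero (m : ℤ) (hm : m ≠ 0) {f : LaurentPolynomial ℂ} (hf : f ≠ 0) :
    subst m f ≠ 0 := fun h => hf (subst_inj m hm (h.trans
      (map_zero (AddMonoidAlgebra.mapDomainRingHom ℂ (AddMonoidHom.mulLeft m))).symm))

theorem stmt17 (m n : ℤ) (hm : m ≠ 0) (hn : n ≠ 0)
    (a b c d s t α β γ δ : LaurentPolynomial ℂ)
    (ha0 : a ≠ 0) (hb0 : b ≠ 0) (hc0 : c ≠ 0) (hd0 : d ≠ 0)
    (hs : s ∣ a ∧ s ∣ c ∧ ∀ e, e ∣ a → e ∣ c → e ∣ s)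
    (ht : t ∣ b ∧ t ∣ d ∧ ∀ e, e ∣ b → e ∣ d → e ∣ t)
    (hα : a = s * α) (hγ : c = s * γ) (hβ : b = t * β) (hδ : d = t * δ) :
    Associated (subst m a * subst n b) (subst m c * subst n d) ↔
      (Associated (subst m α) (subst n δ) ∧
        Associated (subst n β) (subst m γ)) := by
  haveI : IsPrincipalIdealRing (LaurentPolynomial ℂ) := lpid
  have hs0 : s ≠ 0 := fun h => ha0 (by rw [hα, h, zero_mul])
  have ht0 : t ≠ 0 := fun h => hb0 (by rw [hβ, h, zero_mul])
  have hα0 : α ≠ 0 := fun h => ha0 (by rw [hα, h, mul_zero])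
  have hβ0 : β ≠ 0 := fun h => hb0 (by rw [hβ, h, mul_zero])
  have hγ0 : γ ≠ 0 := fun h => hc0 (by rw [hγ, h, mul_zero])
  have hδ0 : δ ≠ 0 := fun h => hd0 (by rw [hδ, h, mul_zero])
  have hcop1 : IsCoprime α γ := by
    refine IsRelPrime.isCoprime (fun e he1 he2 => ?_)
    have h1 : s * e ∣ s := hs.2.2 (s * e) (by rw [hα]; exact mul_dvd_mul_left s he1)
      (by rw [hγ]; exact mul_dvd_mul_left s he2)
    exact isUnit_of_dvd_one ((mul_dvd_mul_iff_left hs0).mp (by rwa [mul_one]))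
  have hcop2 : IsCoprime β δ := by
    refine IsRelPrime.isCoprime (fun e he1 he2 => ?_)
    have h1 : t * e ∣ t := ht.2.2 (t * e) (by rw [hβ]; exact mul_dvd_mul_left t he1)
      (by rw [hδ]; exact mul_dvd_mul_left t he2)
    exact isUnit_of_dvd_one ((mul_dvd_mul_iff_left ht0).mp (by rwa [mul_one]))
  set S := subst m s
  set T := subst n t
  set A := subst m α
  set B := subst n β
  set G := subst m γ
  set D := subst n δ
  have hA : IsCoprime A G :=
    hcop1.map (AddMonoidAlgebra.mapDomainRingHom ℂ (AddMonoidHom.mulLeft m))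
  have hB : IsCoprime B D :=
    hcop2.map (AddMonoidAlgebra.mapDomainRingHom ℂ (AddMonoidHom.mulLeft n))
  have hA0 : A ≠ 0 := subst_ne_zero m hm hα0
  have hB0 : B ≠ 0 := subst_ne_zero n hn hβ0
  have hST : S * T ≠ 0 := mul_ne_zero (subst_ne_zero m hm hs0) (subst_ne_zero n hn ht0)
  rw [hα, hγ, hβ, hδ, subst_mul, subst_mul, subst_mul, subst_mul,
    mul_mul_mul_comm S A T B, mul_mul_mul_comm S G T D]
  constructor
  · intro h
    have h2 : Associated (A * B) (G * D) :=
      Associated.of_mul_left h (Associated.refl (S * T)) hST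
    have hAD : A ∣ D := hA.dvd_of_dvd_mul_left (dvd_trans (dvd_mul_right A B) h2.dvd)
    have hDA : D ∣ A := hB.symm.dvd_of_dvd_mul_right
      (dvd_trans (dvd_mul_left D G) h2.symm.dvd)
    have hADa : Associated A D := associated_of_dvd_dvd hAD hDA
    refine ⟨hADa, ?_⟩
    have h3 : Associated (A * B) (A * G) := by
      rw [mul_comm A G]
      exact h2.trans (Associated.mul_left G hADa.symm)
    exact Associated.of_mul_left h3 (Associated.refl A) hA0
  · rintro ⟨h1, h2⟩
    exact (Associated.refl (S * T)).mul_mul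
      ((h1.mul_mul h2).trans (mul_comm D G ▸ Associated.refl (D * G)))
end
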